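/- Fix an integer d ≥ 2 and a real λ > 1, and let q ∈ (0,1) be the unique solution of q = λ(1-q)^{d-1}/((λ-1)(1-q)^{d-1}+1). Define α(λ) = q·(1 + (d/2 - 1)·(1-q)^{d-1}) / (1 + q - (1-q)^{d-1}) and Φ(λ) = -log[1 - q(1 - 1/λ)] - (d/2 - 1)·log[1 - q²(1 - 1/λ)] - α(λ)·log λ. Then, viewing Φ and α as smooth functions of λ, one has dΦ/dλ = -(log λ)·(dα/dλ); equivalently, on any interval of λ where α is strictly monotone, the composite map α ↦ Φ is differentiable with derivative -log λ. -/

import Mathlib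

set_option maxHeartbeats 2000000 in
/-- Along the frozen-model fixed point `q(λ)`, with
`α(λ) = q(1+(d/2-1)(1-q)^{d-1})/(1+q-(1-q)^{d-1})` and
`Φ(λ) = -log[1-q(1-1/λ)] - (d/2-1)log[1-q²(1-1/λ)] - α(λ)·log λ`, one has
`dΦ/dλ = -(log λ)·(dα/dλ)`: the fugacity `λ` is the Lagrange multiplier conjugate
to the intensity `α`. -/
theorem frozen_exponent_lagrange (d : ℕ) (hd : 2 ≤ d) (q : ℝ → ℝ)
    (hdiff : DifferentiableOn ℝ q (Set.Ioi 1))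
    (hq : ∀ lam ∈ Set.Ioi (1 : ℝ), q lam ∈ Set.Ioo (0 : ℝ) 1 ∧
      q lam = lam * (1 - q lam) ^ (d - 1) /
        ((lam - 1) * (1 - q lam) ^ (d - 1) + 1)) :
    ∀ lam ∈ Set.Ioi (1 : ℝ),
      deriv (fun t : ℝ =>
          -Real.log (1 - q t * (1 - 1 / t))
            - ((d : ℝ) / 2 - 1) * Real.log (1 - (q t) ^ 2 * (1 - 1 / t))
            - (q t * (1 + ((d : ℝ) / 2 - 1) * (1 - q t) ^ (d - 1)) /
                (1 + q t - (1 - q t) ^ (d - 1))) * Real.log t) lam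
        = -Real.log lam *
            deriv (fun t : ℝ =>
              q t * (1 + ((d : ℝ) / 2 - 1) * (1 - q t) ^ (d - 1)) /
                (1 + q t - (1 - q t) ^ (d - 1))) lam := by
  intro lam hlam
  have hl1 : (1:ℝ) < lam := hlam
  have hl0 : (0:ℝ) < lam := lt_trans one_pos hl1
  have hlne : lam ≠ 0 := ne_of_gt hl0
  obtain ⟨hmem, -⟩ := hq lam hlam
  have hQ0 : 0 < q lam := hmem.1
  have hQ1 : q lam < 1 := hmem.2
  have h1d : 1 ≤ d := by omega
  have hq' : HasDerivAt q (deriv q lam) lam :=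
    ((hdiff lam hlam).differentiableAt (isOpen_Ioi.mem_nhds hlam)).hasDerivAt
  set S := deriv q lam with hSdef
  have hW : 0 < lam * (1 - q lam) + q lam := by nlinarith
  have h1Q : (0:ℝ) < 1 - q lam := by linarith
  -- fixed point in polynomial form, on all of Ioi 1
  have hE0 : ∀ t ∈ Set.Ioi (1:ℝ),
      q t * ((t - 1) * (1 - q t) ^ (d - 1) + 1) - t * (1 - q t) ^ (d - 1) = 0 := by
    intro t ht
    obtain ⟨hm, he⟩ := hq t ht
    have hp : (0:ℝ) < (1 - q t) ^ (d - 1) := pow_pos (by linarith [hm.2]) _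
    have ht1 : (1:ℝ) < t := ht
    have hden : (0:ℝ) < (t - 1) * (1 - q t) ^ (d - 1) + 1 := by nlinarith
    rw [eq_div_iff (ne_of_gt hden)] at he
    linarith
  have hml : (1 - q lam) ^ (d - 1) * (lam * (1 - q lam) + q lam) = q lam := by
    linear_combination (-1 : ℝ) * (hE0 lam hlam)
  have hps : (1 - q lam) ^ (d - 1 - 1) * (1 - q lam) = (1 - q lam) ^ (d - 1) := by
    rw [← pow_succ]
    congr 1
    omega
  have hp1 : (1 - q lam) ^ (d - 1) = q lam / (lam * (1 - q lam) + q lam) := by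
    rw [eq_div_iff hW.ne']; exact hml
  have hp2 : (1 - q lam) ^ (d - 1 - 1)
      = q lam / ((1 - q lam) * (lam * (1 - q lam) + q lam)) := by
    rw [eq_div_iff (by positivity)]
    linear_combination (lam * (1 - q lam) + q lam) * hps + hml
  -- derivative of the fixed point identity
  have hpw : HasDerivAt (fun t => (1 - q t) ^ (d - 1))
      ((↑(d-1)) * (1 - q lam) ^ (d - 1 - 1) * (-S)) lam := (hq'.const_sub 1).pow (d - 1)
  have hE := (hq'.mul (((((hasDerivAt_id' lam).sub_const 1 : HasDerivAt (fun t : ℝ => t - 1) 1 lam)).mul hpw).add_const 1)).sub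
      ((hasDerivAt_id' lam).mul hpw)
  have hEzero : deriv (fun t => q t * ((t - 1) * (1 - q t) ^ (d - 1) + 1)
      - t * (1 - q t) ^ (d - 1)) lam = 0 := by
    have heq : (fun t => q t * ((t - 1) * (1 - q t) ^ (d - 1) + 1)
        - t * (1 - q t) ^ (d - 1)) =ᶠ[nhds lam] (fun _ => (0:ℝ)) :=
      Filter.eventuallyEq_of_mem (isOpen_Ioi.mem_nhds hlam) hE0
    rw [heq.deriv_eq]
    exact deriv_const lam 0
  have hC := hE.deriv.symm.trans hEzero
  have hdc : (1:ℝ) ≤ ((d-1:ℕ):ℝ) := by exact_mod_cast (by omega : 1 ≤ d - 1)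
  have hB2 : 0 < (lam - 1) * q lam * (1 - q lam)
      + (lam * (1 - q lam) + q lam) * (1 - q lam)
      + ((d-1:ℕ):ℝ) * q lam * (lam * (1 - q lam) + q lam) := by
    have t1 : 0 < (lam - 1) * q lam * (1 - q lam) :=
      mul_pos (mul_pos (by linarith) hQ0) h1Q
    have t2 : 0 < (lam * (1 - q lam) + q lam) * (1 - q lam) := mul_pos hW h1Q
    have t3 : 0 < ((d-1:ℕ):ℝ) * q lam * (lam * (1 - q lam) + q lam) :=
      mul_pos (mul_pos (by linarith) hQ0) hW
    linarith
  have hS2 : S = q lam * (1 - q lam) ^ 2 /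
      ((lam - 1) * q lam * (1 - q lam)
        + (lam * (1 - q lam) + q lam) * (1 - q lam)
        + ((d-1:ℕ):ℝ) * q lam * (lam * (1 - q lam) + q lam)) := by
    rw [eq_div_iff hB2.ne']
    simp only [Pi.mul_apply] at hC
    linear_combination ((lam * (1 - q lam) + q lam) * (1 - q lam)) * hC
      + ((1 - q lam)^2 - S * (lam - 1) * (1 - q lam)
          - S * ((d-1:ℕ):ℝ) * (lam * (1 - q lam) + q lam)) * hml
      + (-(S * ((d-1:ℕ):ℝ) * (lam * (1 - q lam) + q lam)^2)) * hps
  -- nonvanishing denominators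
  have h1l : 1 / lam < 1 := by rw [div_lt_one hl0]; linarith
  have h0l : 0 < 1 / lam := by positivity
  have hv1pos : 0 < 1 - q lam * (1 - 1 / lam) := by nlinarith
  have hv1ne : 1 - q lam * (1 - 1 / lam) ≠ 0 := hv1pos.ne'
  have hv2pos : 0 < 1 - (q lam) ^ 2 * (1 - 1 / lam) := by nlinarith
  have hv2ne : 1 - (q lam) ^ 2 * (1 - 1 / lam) ≠ 0 := hv2pos.ne'
  have hple : (1 - q lam) ^ (d - 1) ≤ 1 - q lam :=
    pow_le_of_le_one h1Q.le (by linarith) (by omega)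
  have hDnpos : 0 < 1 + q lam - (1 - q lam) ^ (d - 1) := by linarith
  have hDnne : 1 + q lam - (1 - q lam) ^ (d - 1) ≠ 0 := hDnpos.ne'
  -- derivatives of the main functions
  have hu : HasDerivAt (fun t : ℝ => 1 - 1 / t) (-((0 * lam - 1 * 1) / lam ^ 2)) lam :=
    ((hasDerivAt_const lam (1:ℝ)).div (hasDerivAt_id' lam) hlne).const_sub 1
  have hv1 := (hq'.mul hu).const_sub 1
  have hlog1 := (hv1.log hv1ne).neg
  have hv2 := ((hq'.pow 2).mul hu).const_sub 1
  have hlog2 := (hv2.log hv2ne).const_mul ((d:ℝ)/2 - 1)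
  have hN := hq'.mul ((hpw.const_mul ((d:ℝ)/2 - 1)).const_add 1)
  have hDq := (hq'.const_add 1).sub hpw
  have halpha := hN.div hDq hDnne
  have hF := (hlog1.sub hlog2).sub (halpha.mul (Real.hasDerivAt_log hlne))
  erw [hF.deriv, halpha.deriv]
  simp only [Pi.mul_apply, Pi.sub_apply, Pi.add_apply, Pi.div_apply, Pi.neg_apply, Pi.pow_apply]
  have hcast : ((d-1:ℕ):ℝ) = (d:ℝ) - 1 := by
    rw [Nat.cast_sub h1d, Nat.cast_one]
  have hDWne : (1 + q lam) * (lam * (1 - q lam) + q lam) - q lam ≠ 0 := by nlinarith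
  have hv1ne' : lam - q lam * (lam - 1) ≠ 0 := by nlinarith
  have hv2ne' : lam - q lam ^ 2 * (lam - 1) ≠ 0 := by nlinarith
  have hB2ne := hB2.ne'
  have hWne := hW.ne'
  have h1Qne := h1Q.ne'
  have hB2e : -(q lam * lam * 2) + (q lam * lam * (d:ℝ) - q lam ^ 2) +
      (q lam ^ 2 * lam - q lam ^ 2 * lam * (d:ℝ)) + q lam ^ 2 * (d:ℝ) + lam
      = (lam - 1) * q lam * (1 - q lam) + (lam * (1 - q lam) + q lam) * (1 - q lam)
        + ((d:ℝ) - 1) * q lam * (lam * (1 - q lam) + q lam) := by ring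
  have hB2ne2 : -(q lam * lam * 2) + (q lam * lam * (d:ℝ) - q lam ^ 2) +
      (q lam ^ 2 * lam - q lam ^ 2 * lam * (d:ℝ)) + q lam ^ 2 * (d:ℝ) + lam ≠ 0 := by
    rw [hB2e, ← hcast]; exact hB2.ne'
  have hB2ne3 : (lam - 1) * q lam * (1 - q lam) + (lam * (1 - q lam) + q lam) * (1 - q lam)
      + ((d:ℝ) - 1) * q lam * (lam * (1 - q lam) + q lam) ≠ 0 := by
    rw [← hcast]; exact hB2.ne'
  have key : -(-(S * (1 - 1 / lam) + q lam * -((0 * lam - 1 * 1) / lam ^ 2)) /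
        (1 - q lam * (1 - 1 / lam)))
      - ((d:ℝ) / 2 - 1) *
        (-(((2:ℕ):ℝ) * q lam ^ (2 - 1) * S * (1 - 1 / lam)
            + q lam ^ 2 * -((0 * lam - 1 * 1) / lam ^ 2)) /
          (1 - q lam ^ 2 * (1 - 1 / lam)))
      = q lam * (1 + ((d:ℝ) / 2 - 1) * (1 - q lam) ^ (d - 1)) /
          (1 + q lam - (1 - q lam) ^ (d - 1)) / lam := by
    have e1 : 1 - q lam * (1 - 1 / lam) = (lam - q lam * (lam - 1)) / lam := by field_simp
    have e2 : 1 - q lam ^ 2 * (1 - 1 / lam) = (lam - q lam ^ 2 * (lam - 1)) / lam := by field_simp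
    have e3 : 1 + q lam - q lam / (lam * (1 - q lam) + q lam)
        = ((1 + q lam) * (lam * (1 - q lam) + q lam) - q lam) / (lam * (1 - q lam) + q lam) := by
      rw [sub_div, mul_div_cancel_right₀ _ hWne]
    rw [hS2, hp1, hcast, e1, e2, e3]
    generalize hB : (lam - 1) * q lam * (1 - q lam) + (lam * (1 - q lam) + q lam) * (1 - q lam)
        + ((d:ℝ) - 1) * q lam * (lam * (1 - q lam) + q lam) = B at hB2ne3 ⊢
    generalize hD : (1 + q lam) * (lam * (1 - q lam) + q lam) - q lam = D at hDWne ⊢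
    generalize hA1 : lam - q lam * (lam - 1) = A1 at hv1ne' ⊢
    generalize hA2 : lam - q lam ^ 2 * (lam - 1) = A2 at hv2ne' ⊢
    generalize hW' : lam * (1 - q lam) + q lam = W at hWne ⊢
    field_simp
    subst hB hD hA1 hA2 hW'
    ring
  linear_combination key
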